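/- arXiv:1204.4373 — 4 statements merged into one kernel-verified Lean document; each statement's English description precedes it below -/
import Mathlib

section
/- Let A be a symmetric real n×n matrix and S ⊆ {1,…,n} a nonempty index set with maximal element k. If the principal submatrix A_{S∖{k}} indexed by S∖{k} is positive definite, then A_S is positive definite if and only if det(A_S) > 0. -/
open Matrix Finset

section Helpers

variable {m l : Type*} [Fintype m] [Fintype l] [DecidableEq m] [DecidableEq l]

private lemma posDef_submatrix_equiv_aux {M : Matrix m m ℝ} (hM : M.PosDef) (e : l ≃ m) :
    (M.submatrix e e).PosDef := by
  refine Matrix.PosDef.of_dotProduct_mulVec_pos ((isHermitian_submatrix_equiv e).2 hM.1) (fun x hx => ?_)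
  have hx' : x ∘ e.symm ≠ 0 := by
    intro hc
    apply hx
    funext i
    have := congrFun hc (e i)
    simpa using this
  have := hM.dotProduct_mulVec_pos hx'
  have hstar : star x = star (x ∘ e.symm) ∘ e := by
    funext i; simp [Pi.star_apply, Function.comp]
  rw [Matrix.submatrix_mulVec_equiv, hstar]
  rwa [comp_equiv_dotProduct_comp_equiv]

private lemma posDef_submatrix_equiv' {M : Matrix m m ℝ} (e : l ≃ m) :
    (M.submatrix e e).PosDef ↔ M.PosDef :=
  ⟨fun h => by simpa using posDef_submatrix_equiv_aux h e.symm,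
   fun h => posDef_submatrix_equiv_aux h e⟩

private lemma posDef_fromBlocks₁₁' {A : Matrix m m ℝ} (B : Matrix m l ℝ) (D : Matrix l l ℝ)
    (hA : A.PosDef) [Invertible A] (hS : (D - Bᴴ * A⁻¹ * B).PosDef) :
    (fromBlocks A B Bᴴ D).PosDef := by
  refine Matrix.PosDef.of_dotProduct_mulVec_pos ((Matrix.IsHermitian.fromBlocks₁₁ B D hA.1).2 hS.1) (fun x hx => ?_)
  rw [dotProduct_mulVec, ← Sum.elim_comp_inl_inr x,
    Matrix.schur_complement_eq₁₁ B D _ _ hA.1]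
  by_cases h2 : x ∘ Sum.inr = 0
  · have h1 : x ∘ Sum.inl ≠ 0 := by
      intro hc
      apply hx
      funext i
      cases i with
      | inl i => exact congrFun hc i
      | inr i => exact congrFun h2 i
    have hz : (A⁻¹ * B) *ᵥ (x ∘ Sum.inr) = 0 := by rw [h2, mulVec_zero]
    have hpos := hA.dotProduct_mulVec_pos (x := x ∘ Sum.inl + (A⁻¹ * B) *ᵥ (x ∘ Sum.inr)) (by rw [hz, add_zero]; exact h1)
    rw [dotProduct_mulVec] at hpos
    have hzero : star (x ∘ Sum.inr) ᵥ* (D - Bᴴ * A⁻¹ * B) ⬝ᵥ (x ∘ Sum.inr) = 0 := by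
      rw [h2]; simp
    rw [hzero, add_zero]
    exact hpos
  · have hpos2 := hS.dotProduct_mulVec_pos h2
    rw [dotProduct_mulVec] at hpos2
    have hnn := hA.posSemidef.dotProduct_mulVec_nonneg (x ∘ Sum.inl + (A⁻¹ * B) *ᵥ (x ∘ Sum.inr))
    rw [dotProduct_mulVec] at hnn
    exact add_pos_of_nonneg_of_pos (by exact_mod_cast hnn) hpos2

private lemma posDef_of_det_pos_unit {M : Matrix Unit Unit ℝ} (h : 0 < M.det) : M.PosDef := by
  have hM : 0 < M () () := by rwa [Matrix.det_unique] at h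
  refine Matrix.PosDef.of_dotProduct_mulVec_pos ?_ (fun x hx => ?_)
  · ext i j; cases i; cases j; rfl
  · have hx0 : x () ≠ 0 := by
      intro hc; apply hx; funext i; cases i; exact hc
    have : dotProduct (star x) (M *ᵥ x) = M () () * (x () * x ()) := by
      simp [dotProduct, Matrix.mulVec, star]
      ring
    rw [this]
    exact mul_pos hM (mul_self_pos.2 hx0)

end Helpers

/-- For a symmetric real `n × n` matrix `A` and a nonempty index set `S` with
maximal element `k`: if the principal submatrix indexed by `S \ {k}` is
positive definite, then the principal submatrix indexed by `S` is positive
definite iff its determinant is positive. -/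
theorem posDef_iff_det_pos_of_erase_max_posDef
    {n : ℕ} (A : Matrix (Fin n) (Fin n) ℝ) (hA : A.IsSymm)
    (S : Finset (Fin n)) (hS : S.Nonempty)
    (h : (A.submatrix (fun i : {x // x ∈ S.erase (S.max' hS)} => (i : Fin n))
          (fun j : {x // x ∈ S.erase (S.max' hS)} => (j : Fin n))).PosDef) :
    (A.submatrix (fun i : {x // x ∈ S} => (i : Fin n))
        (fun j : {x // x ∈ S} => (j : Fin n))).PosDef ↔
      0 < (A.submatrix (fun i : {x // x ∈ S} => (i : Fin n))
        (fun j : {x // x ∈ S} => (j : Fin n))).det := by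
  set k := S.max' hS with hk
  set A₁ := A.submatrix (fun i : {x // x ∈ S.erase k} => (i : Fin n))
      (fun j : {x // x ∈ S.erase k} => (j : Fin n)) with hA₁
  set B := A.submatrix (fun i : {x // x ∈ S} => (i : Fin n))
      (fun j : {x // x ∈ S} => (j : Fin n)) with hB
  -- the equivalence splitting off the max element
  let e : ({x // x ∈ S.erase k} ⊕ Unit) ≃ {x // x ∈ S} :=
    { toFun := Sum.elim (fun i => ⟨i.1, Finset.mem_of_mem_erase i.2⟩)
        (fun _ => ⟨k, S.max'_mem hS⟩)
      invFun := fun x => if hx : x.1 ∈ S.erase k then Sum.inl ⟨x.1, hx⟩ else Sum.inr ()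
      left_inv := by
        rintro (i | u)
        · simp [i.2]
        · simp
      right_inv := by
        rintro ⟨x, hx⟩
        by_cases hxe : x ∈ S.erase k
        · simp [hxe]
        · have : x = k := by
            by_contra hne
            exact hxe (Finset.mem_erase.2 ⟨hne, hx⟩)
          subst this
          simp [hxe] }
  let b : Matrix {x // x ∈ S.erase k} Unit ℝ := fun i _ => A i.1 k
  let d : Matrix Unit Unit ℝ := fun _ _ => A k k
  have hblock : B.submatrix e e = fromBlocks A₁ b bᴴ d := by
    ext i j
    rcases i with i | u <;> rcases j with j | v <;>
      simp [e, fromBlocks, B, A₁, b, d, conjTranspose, hA.apply, transpose_apply] <;> rfl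
  have hBherm : B.IsHermitian := by
    ext i j
    exact hA.apply i.1 j.1
  haveI : Invertible A₁ := h.isUnit.invertible
  have hdet : B.det = (B.submatrix e e).det := (Matrix.det_submatrix_equiv_self e B).symm
  rw [← posDef_submatrix_equiv' e, hdet, hblock]
  constructor
  · exact fun hp => hp.det_pos
  · intro hdp
    rw [Matrix.det_fromBlocks₁₁, Matrix.invOf_eq_nonsing_inv] at hdp
    have hA₁det := h.det_pos
    have hschur : 0 < (d - bᴴ * A₁⁻¹ * b).det := by
      by_contra hc
      push_neg at hc
      nlinarith
    exact posDef_fromBlocks₁₁' b d h (posDef_of_det_pos_unit hschur)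
end

section
/- For t ≠ 1, j ≠ 1, the determinant of the 4×4 matrix with rows (−1,0,0,0), (0,0,−1,ξ^{t−2}), (−i^m η, i^m η ξ^{j−1}, −1, 0), (2 i^m η ξ^{2k+1−j}, i^m η ξ^{2k}, 0, −1) equals i^m η (ξ^{j−1} − ξ^{2k+t−2}); consequently it vanishes if and only if t + 2k − j − 1 ≡ 0 (mod 3). -/
open Matrix Complex

noncomputable section

/-- A primitive cube root of unity. -/
def ξ : ℂ := Complex.exp (2 * Real.pi * Complex.I / 3)

/-- `η = √3 / 3`. -/
def η : ℂ := (Real.sqrt 3 : ℂ) / 3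

/-- For `t, j ∈ {2,3,4}`, `k ∈ {0,1,2}`, `m ∈ {0,1,2,3}`, the determinant of
the `4 × 4` matrix whose rows cut out the line `L_{1,t}` of the first type and
the line `L_{Zᵏ Tⱼ, λₘ}` of the second type equals
`iᵐ η (ξ^{j-1} − ξ^{2k+t-2})`; consequently it vanishes iff
`t + 2k − j − 1 ≡ 0 (mod 3)`. -/
theorem det_line_intersection_formula
    (m k t j : ℤ)
    (hm : m ∈ ({0, 1, 2, 3} : Set ℤ)) (hk : k ∈ ({0, 1, 2} : Set ℤ))
    (ht : t ∈ ({2, 3, 4} : Set ℤ)) (hj : j ∈ ({2, 3, 4} : Set ℤ)) :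
    (!![(-1 : ℂ), 0, 0, 0;
        0, 0, -1, ξ ^ (t - 2);
        -(I ^ m * η), I ^ m * η * ξ ^ (j - 1), -1, 0;
        2 * I ^ m * η * ξ ^ (2 * k + 1 - j), I ^ m * η * ξ ^ (2 * k), 0, -1]).det
      = I ^ m * η * (ξ ^ (j - 1) - ξ ^ (2 * k + t - 2)) ∧
    ((!![(-1 : ℂ), 0, 0, 0;
        0, 0, -1, ξ ^ (t - 2);
        -(I ^ m * η), I ^ m * η * ξ ^ (j - 1), -1, 0;
        2 * I ^ m * η * ξ ^ (2 * k + 1 - j), I ^ m * η * ξ ^ (2 * k), 0, -1]).det = 0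
      ↔ (t + 2 * k - j - 1) % 3 = 0) := by
  have hξ0 : ξ ≠ 0 := Complex.exp_ne_zero _
  have hprim : IsPrimitiveRoot ξ 3 := Complex.isPrimitiveRoot_exp 3 (by norm_num)
  have hdet : (!![(-1 : ℂ), 0, 0, 0;
        0, 0, -1, ξ ^ (t - 2);
        -(I ^ m * η), I ^ m * η * ξ ^ (j - 1), -1, 0;
        2 * I ^ m * η * ξ ^ (2 * k + 1 - j), I ^ m * η * ξ ^ (2 * k), 0, -1]).det
      = I ^ m * η * (ξ ^ (j - 1) - ξ ^ (2 * k + t - 2)) := by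
    simp [Matrix.det_succ_row_zero, Fin.sum_univ_succ]
    rw [show (2*k+t-2 : ℤ) = (t-2)+(2*k) by ring, zpow_add₀ hξ0]
    ring
  refine ⟨hdet, ?_⟩
  rw [hdet]
  have hI : (I : ℂ) ^ m ≠ 0 := zpow_ne_zero _ I_ne_zero
  have hη : η ≠ 0 := by
    simp only [η, div_ne_zero_iff]
    norm_num [Real.sqrt_eq_zero']
  rw [mul_eq_zero, mul_eq_zero, sub_eq_zero]
  simp only [hI, hη, or_self, false_or]
  have key : ξ ^ (j - 1) = ξ ^ (2 * k + t - 2) ↔ (3:ℤ) ∣ (t + 2 * k - j - 1) := by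
    rw [← div_eq_one_iff_eq (zpow_ne_zero _ hξ0), ← zpow_sub₀ hξ0,
      hprim.zpow_eq_one_iff_dvd]
    constructor
    · intro h
      have := (dvd_neg).2 h
      convert this using 1 <;> [rfl; simp; ring]
    · intro h
      have := (dvd_neg).2 h
      convert this using 1 <;> [rfl; simp; ring]
  rw [key, Int.dvd_iff_emod_eq_zero]

end
end

section
/- In the Bareiss fraction-free triangularization of an integer matrix, after clearing below the diagonal the lower-right diagonal entry of the resulting upper-triangular matrix equals the determinant of the original matrix. Precisely: if A is an n×n integer matrix whose leading principal minors d₁,…,d_{n−1} are nonzero, then the Bareiss algorithm produces an upper triangular integer matrix B with B[k,k] equal to the k-th leading principal minor of A; in particular B[n,n] = det(A). -/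
open Matrix

/-- One step of the Bareiss fraction-free elimination with pivot row `i`:
entries in rows below row `i` are updated by
`B[s,j] ← (B[s,j]·B[i,i] − B[i,j]·B[s,i]) div B[i−1,i−1]` (with the previous
pivot taken to be `1` when `i = 0`). -/
def bareissStep {n : ℕ} (i : ℕ) (B : Matrix (Fin n) (Fin n) ℤ) :
    Matrix (Fin n) (Fin n) ℤ :=
  if h : i < n then
    Matrix.of fun s j =>
      if i < (s : ℕ) then
        (B s j * B ⟨i, h⟩ ⟨i, h⟩ - B ⟨i, h⟩ j * B s ⟨i, h⟩) /
          (if h0 : i = 0 then 1 else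
            B ⟨i - 1, by omega⟩ ⟨i - 1, by omega⟩)
      else B s j
  else B

/-- The Bareiss fraction-free triangularization of an integer matrix. -/
def bareiss {n : ℕ} (A : Matrix (Fin n) (Fin n) ℤ) : Matrix (Fin n) (Fin n) ℤ :=
  (List.range n).foldl (fun B i => bareissStep i B) A

/-- The `k`-th leading principal minor of `A` (the determinant of the
top-left `(k+1) × (k+1)` submatrix, `0`-indexed). -/
def leadingMinor {n : ℕ} (A : Matrix (Fin n) (Fin n) ℤ) (k : Fin n) : ℤ :=
  (A.submatrix (fun i : Fin ((k : ℕ) + 1) => Fin.castLE (by omega) i)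
    (fun j : Fin ((k : ℕ) + 1) => Fin.castLE (by omega) j)).det


namespace BareissAux

variable {n : ℕ}

/-- row selector: indices below `t` map to themselves, others to `s`. -/
def rowf (t : ℕ) (s : Fin n) (a : ℕ) : Fin n :=
  if h : a < t ∧ a < n then ⟨a, h.2⟩ else s

/-- the bordered minor: rows `0,…,t-1,s`, columns `0,…,t-1,j`. -/
def Dm (A : Matrix (Fin n) (Fin n) ℤ) (t : ℕ) (s j : Fin n) : ℤ :=
  (Matrix.of fun a b : Fin (t + 1) => A (rowf t s a) (rowf t j b)).det

/-- the leading principal `t × t` minor. -/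
def pm (A : Matrix (Fin n) (Fin n) ℤ) (t : ℕ) : ℤ :=
  if h : t ≤ n then
    (Matrix.of fun a b : Fin t =>
      A ⟨a, lt_of_lt_of_le a.2 h⟩ ⟨b, lt_of_lt_of_le b.2 h⟩).det
  else 0

lemma cast_det {m : ℕ} (M : Matrix (Fin m) (Fin m) ℤ) :
    ((M.det : ℤ) : ℚ) = (Matrix.of fun a b => ((M a b : ℤ) : ℚ)).det := by
  rw [show ((M.det : ℤ) : ℚ) = (Int.castRingHom ℚ) M.det from rfl, RingHom.map_det]
  rfl

/-- the leading block over ℚ. -/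
noncomputable def Pq (A : Matrix (Fin n) (Fin n) ℤ) (t : ℕ) (ht : t ≤ n) :
    Matrix (Fin t) (Fin t) ℚ :=
  Matrix.of fun a b =>
    ((A ⟨a, lt_of_lt_of_le a.2 ht⟩ ⟨b, lt_of_lt_of_le b.2 ht⟩ : ℤ) : ℚ)

lemma cast_pm (A : Matrix (Fin n) (Fin n) ℤ) (t : ℕ) (ht : t ≤ n) :
    ((pm A t : ℤ) : ℚ) = (Pq A t ht).det := by
  rw [pm, dif_pos ht, cast_det]
  rfl

/-- Schur complement entry. -/
noncomputable def qf (A : Matrix (Fin n) (Fin n) ℤ) (t : ℕ) (ht : t ≤ n)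
    (u v : Fin n) : ℚ :=
  (A u v : ℚ) - ∑ b : Fin t,
    (∑ a : Fin t, ((A u ⟨a, lt_of_lt_of_le a.2 ht⟩ : ℤ) : ℚ) * (Pq A t ht)⁻¹ a b) *
      ((A ⟨b, lt_of_lt_of_le b.2 ht⟩ v : ℤ) : ℚ)

/-- bordered row selector with an `m`-vector of extra rows. -/
def brow (t m : ℕ) (ht : t ≤ n) (r : Fin m → Fin n) (a : Fin (t + m)) : Fin n :=
  if h : (a : ℕ) < t then ⟨a, lt_of_lt_of_le h ht⟩
  else r ⟨(a : ℕ) - t, by have := a.isLt; omega⟩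

lemma brow_castAdd {t m : ℕ} (ht : t ≤ n) (r : Fin m → Fin n) (a : Fin t) :
    brow t m ht r (Fin.castAdd m a) = ⟨a, lt_of_lt_of_le a.2 ht⟩ := by
  rw [brow, dif_pos (by simpa using a.2)]
  ext
  simp

lemma brow_natAdd {t m : ℕ} (ht : t ≤ n) (r : Fin m → Fin n) (x : Fin m) :
    brow t m ht r (Fin.natAdd t x) = r x := by
  rw [brow, dif_neg (by simp)]
  congr 1
  ext
  simp

lemma det_bordered (A : Matrix (Fin n) (Fin n) ℤ) (t m : ℕ) (ht : t ≤ n)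
    (r c : Fin m → Fin n) (hp : (Pq A t ht).det ≠ 0) :
    (Matrix.of fun a b : Fin (t + m) =>
        ((A (brow t m ht r a) (brow t m ht c b) : ℤ) : ℚ)).det
      = (Pq A t ht).det *
        (Matrix.of fun x y : Fin m => qf A t ht (r x) (c y)).det := by
  haveI : Invertible (Pq A t ht) :=
    (Pq A t ht).invertibleOfIsUnitDet (isUnit_iff_ne_zero.2 hp)
  have hsub : (Matrix.of fun a b : Fin (t + m) =>
        ((A (brow t m ht r a) (brow t m ht c b) : ℤ) : ℚ)).submatrix
          finSumFinEquiv finSumFinEquiv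
      = fromBlocks (Pq A t ht)
          (Matrix.of fun (a : Fin t) (y : Fin m) =>
            ((A ⟨a, lt_of_lt_of_le a.2 ht⟩ (c y) : ℤ) : ℚ))
          (Matrix.of fun (x : Fin m) (b : Fin t) =>
            ((A (r x) ⟨b, lt_of_lt_of_le b.2 ht⟩ : ℤ) : ℚ))
          (Matrix.of fun x y : Fin m => ((A (r x) (c y) : ℤ) : ℚ)) := by
    ext x y
    cases x <;> cases y <;>
      simp [brow_castAdd, brow_natAdd, Pq]
  rw [← det_submatrix_equiv_self finSumFinEquiv, hsub, det_fromBlocks₁₁]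
  congr 1
  congr 1
  ext x y
  simp only [Matrix.sub_apply, Matrix.mul_apply, Matrix.of_apply, qf,
    invOf_eq_nonsing_inv]


lemma rowf_brow1 {t : ℕ} (hle : t ≤ n) (u : Fin n) (a : Fin (t + 1)) :
    rowf t u (a : ℕ) = brow t 1 hle ![u] a := by
  rw [rowf, brow]
  by_cases h : (a : ℕ) < t
  · rw [dif_pos ⟨h, lt_of_lt_of_le h hle⟩, dif_pos h]
  · rw [dif_neg (fun hc => h hc.1), dif_neg h]
    simp [Matrix.cons_val_fin_one]

lemma rowf_brow2 {t : ℕ} (hle : t ≤ n) (htn : t < n) (u : Fin n) (a : Fin (t + 2)) :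
    rowf (t + 1) u (a : ℕ) = brow t 2 hle ![⟨t, htn⟩, u] a := by
  have ha := a.isLt
  rw [rowf, brow]
  rcases Nat.lt_trichotomy (a : ℕ) t with h | h | h
  · rw [dif_pos ⟨by omega, by omega⟩, dif_pos h]
  · rw [dif_pos ⟨by omega, by omega⟩, dif_neg (by omega)]
    simp only [show (a : ℕ) - t = 0 from by omega, Fin.mk_zero, Matrix.cons_val_zero]
    exact Fin.ext h
  · rw [dif_neg (by omega), dif_neg (by omega)]
    simp only [show (a : ℕ) - t = 1 from by omega, Fin.mk_one, Matrix.cons_val_one,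
      Matrix.head_cons, Matrix.cons_val_zero]

lemma sylvester (A : Matrix (Fin n) (Fin n) ℤ) (t : ℕ) (ht : t + 1 ≤ n)
    (hp : pm A t ≠ 0) (s j : Fin n) :
    Dm A (t + 1) s j * pm A t
      = Dm A t s j * Dm A t ⟨t, ht⟩ ⟨t, ht⟩ - Dm A t ⟨t, ht⟩ j * Dm A t s ⟨t, ht⟩ := by
  have hle : t ≤ n := by omega
  have hpq : (Pq A t hle).det ≠ 0 := by
    rw [← cast_pm A t hle]
    exact_mod_cast hp
  have key : ∀ u v : Fin n,
      ((Dm A t u v : ℤ) : ℚ) = (Pq A t hle).det * qf A t hle u v := by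
    intro u v
    rw [Dm, cast_det]
    have hmat : (Matrix.of fun a b : Fin (t + 1) =>
          (((Matrix.of fun a b : Fin (t + 1) =>
            A (rowf t u (a : ℕ)) (rowf t v (b : ℕ))) a b : ℤ) : ℚ))
        = Matrix.of fun a b : Fin (t + 1) =>
            ((A (brow t 1 hle ![u] a) (brow t 1 hle ![v] b) : ℤ) : ℚ) := by
      ext a b
      simp only [Matrix.of_apply, ← rowf_brow1 hle]
    rw [hmat, det_bordered A t 1 hle ![u] ![v] hpq]
    congr 1
    rw [show (Matrix.of fun x y : Fin 1 => qf A t hle (![u] x) (![v] y)).det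
      = qf A t hle (![u] 0) (![v] 0) from Matrix.det_fin_one _]
    simp
  have key2 : ((Dm A (t + 1) s j : ℤ) : ℚ)
      = (Pq A t hle).det *
        (qf A t hle ⟨t, ht⟩ ⟨t, ht⟩ * qf A t hle s j
          - qf A t hle ⟨t, ht⟩ j * qf A t hle s ⟨t, ht⟩) := by
    rw [Dm, cast_det]
    have hmat : (Matrix.of fun a b : Fin (t + 1 + 1) =>
          (((Matrix.of fun a b : Fin (t + 1 + 1) =>
            A (rowf (t + 1) s (a : ℕ)) (rowf (t + 1) j (b : ℕ))) a b : ℤ) : ℚ))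
        = Matrix.of fun a b : Fin (t + 2) =>
            ((A (brow t 2 hle ![⟨t, ht⟩, s] a) (brow t 2 hle ![⟨t, ht⟩, j] b) : ℤ) : ℚ) := by
      ext a b
      simp only [Matrix.of_apply, ← rowf_brow2 hle ht]
    rw [hmat, det_bordered A t 2 hle ![⟨t, ht⟩, s] ![⟨t, ht⟩, j] hpq]
    congr 1
    rw [Matrix.det_fin_two]
    simp
  have hfin : ((Dm A (t + 1) s j * pm A t : ℤ) : ℚ)
      = ((Dm A t s j * Dm A t ⟨t, ht⟩ ⟨t, ht⟩
          - Dm A t ⟨t, ht⟩ j * Dm A t s ⟨t, ht⟩ : ℤ) : ℚ) := by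
    push_cast
    rw [key2, key, key, key, key, cast_pm A t hle]
    ring
  exact_mod_cast hfin


lemma pm_zero (A : Matrix (Fin n) (Fin n) ℤ) : pm A 0 = 1 := by
  rw [pm, dif_pos (Nat.zero_le n)]
  exact Matrix.det_isEmpty

lemma rowf_self {t : ℕ} (h : t < n) (a : Fin (t + 1)) :
    rowf t ⟨t, h⟩ (a : ℕ) = ⟨a, lt_of_lt_of_le a.isLt h⟩ := by
  rw [rowf]
  by_cases hc : (a : ℕ) < t ∧ (a : ℕ) < n
  · rw [dif_pos hc]
  · rw [dif_neg hc]
    have ha := a.isLt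
    apply Fin.ext
    simp only [] at hc ⊢
    omega

lemma Dm_tt (A : Matrix (Fin n) (Fin n) ℤ) {t : ℕ} (h : t < n) :
    Dm A t ⟨t, h⟩ ⟨t, h⟩ = pm A (t + 1) := by
  rw [Dm, pm, dif_pos (show t + 1 ≤ n from h)]
  congr 1
  ext a b
  simp only [Matrix.of_apply, rowf_self h]

lemma leadingMinor_eq_pm (A : Matrix (Fin n) (Fin n) ℤ) (k : Fin n) :
    leadingMinor A k = pm A ((k : ℕ) + 1) := by
  rw [leadingMinor, pm, dif_pos (show (k : ℕ) + 1 ≤ n from k.isLt)]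
  all_goals rfl

lemma Dm_lower (A : Matrix (Fin n) (Fin n) ℤ) (s j : Fin n) (h : (j : ℕ) < (s : ℕ)) :
    Dm A (s : ℕ) s j = 0 := by
  rw [Dm]
  apply Matrix.det_zero_of_column_eq
    (i := (⟨(j : ℕ), Nat.lt_succ_of_lt h⟩ : Fin ((s : ℕ) + 1)))
    (j := Fin.last (s : ℕ))
  · intro hc
    have := congrArg Fin.val hc
    simp [Fin.last] at this
    omega
  · intro k
    simp only [Matrix.of_apply]
    congr 1
    rw [rowf, rowf, dif_pos ⟨h, j.isLt⟩, dif_neg (by simp [Fin.last])]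

lemma rowf_diag_val (s : Fin n) (a : Fin ((s : ℕ) + 1)) :
    ((rowf (s : ℕ) s (a : ℕ) : Fin n) : ℕ) = (a : ℕ) := by
  rw [rowf]
  by_cases hc : (a : ℕ) < (s : ℕ) ∧ (a : ℕ) < n
  · rw [dif_pos hc]
  · rw [dif_neg hc]
    push_neg at hc
    have h1 := a.isLt
    have h2 := s.isLt
    omega

lemma Dm_diag (A : Matrix (Fin n) (Fin n) ℤ) (s : Fin n) :
    Dm A (s : ℕ) s s = leadingMinor A s := by
  rw [Dm, leadingMinor]
  congr 1
  ext a b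
  simp only [Matrix.of_apply, Matrix.submatrix_apply]
  congr 1 <;> · apply Fin.ext; simp [rowf_diag_val]

lemma bareissStep_eq {i : ℕ} (h : i < n) (B : Matrix (Fin n) (Fin n) ℤ) :
    bareissStep i B = Matrix.of fun (s j : Fin n) =>
      if i < (s : ℕ) then
        (B s j * B ⟨i, h⟩ ⟨i, h⟩ - B ⟨i, h⟩ j * B s ⟨i, h⟩) /
          (if h0 : i = 0 then 1 else
            B ⟨i - 1, by omega⟩ ⟨i - 1, by omega⟩)
      else B s j := by
  unfold bareissStep
  rw [dif_pos h]

lemma Dm_zero (A : Matrix (Fin n) (Fin n) ℤ) (s j : Fin n) : Dm A 0 s j = A s j := by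
  rw [Dm]
  have h := Matrix.det_fin_one
    (Matrix.of fun a b : Fin 1 => A (rowf 0 s (a : ℕ)) (rowf 0 j (b : ℕ)))
  rw [show (Matrix.of fun a b : Fin (0 + 1) => A (rowf 0 s (a : ℕ)) (rowf 0 j (b : ℕ)))
    = (Matrix.of fun a b : Fin 1 => A (rowf 0 s (a : ℕ)) (rowf 0 j (b : ℕ))) from rfl, h]
  simp [rowf]

lemma foldl_eq (A : Matrix (Fin n) (Fin n) ℤ)
    (hm : ∀ t, t < n → pm A t ≠ 0) :
    ∀ i, i ≤ n → ∀ s j : Fin n,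
      ((List.range i).foldl (fun B k => bareissStep k B) A) s j
        = Dm A (min i (s : ℕ)) s j := by
  intro i
  induction i with
  | zero =>
    intro _ s j
    simp only [List.range_zero, List.foldl_nil, Nat.zero_min]
    exact (Dm_zero A s j).symm
  | succ i ih =>
    intro hi s j
    rw [List.range_succ, List.foldl_append, List.foldl_cons, List.foldl_nil]
    have hin : i < n := hi
    have ihM := ih (le_of_lt hin)
    rw [bareissStep_eq hin, Matrix.of_apply]
    by_cases hs : i < (s : ℕ)
    · rw [if_pos hs]
      rw [ihM s j, ihM ⟨i, hin⟩ ⟨i, hin⟩, ihM ⟨i, hin⟩ j, ihM s ⟨i, hin⟩]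
      rw [show min i ((⟨i, hin⟩ : Fin n) : ℕ) = i from by simp <;> omega,
          show min i (s : ℕ) = i from by omega]
      rw [← sylvester A i hin (hm i hin) s j]
      rw [show min (i + 1) (s : ℕ) = i + 1 from by omega]
      have hdiv : (if h0 : i = 0 then (1 : ℤ) else
          ((List.range i).foldl (fun B k => bareissStep k B) A)
            ⟨i - 1, by omega⟩ ⟨i - 1, by omega⟩) = pm A i := by
        by_cases h0 : i = 0
        · rw [dif_pos h0, h0, pm_zero]
        · rw [dif_neg h0, ihM]
          rw [show min i ((⟨i - 1, by omega⟩ : Fin n) : ℕ) = i - 1 from by simp <;> omega]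
          rw [Dm_tt A (show i - 1 < n by omega)]
          congr 1
          omega
      rw [hdiv]
      exact Int.mul_ediv_cancel _ (hm i hin)
    · rw [if_neg hs, ihM s j,
        show min i (s : ℕ) = min (i + 1) (s : ℕ) from by omega]


lemma leadingMinor_last (A : Matrix (Fin n) (Fin n) ℤ) (h0 : 0 < n) :
    leadingMinor A ⟨n - 1, Nat.sub_lt h0 Nat.one_pos⟩ = A.det := by
  rw [leadingMinor]
  have he : (((⟨n - 1, Nat.sub_lt h0 Nat.one_pos⟩ : Fin n) : ℕ)) + 1 = n := by
    show n - 1 + 1 = n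
    omega
  rw [← Matrix.det_submatrix_equiv_self (finCongr he) A]
  all_goals rfl

end BareissAux

/-- If all proper leading principal minors of the integer matrix `A` are
nonzero, then the Bareiss algorithm produces an upper triangular matrix `B`
whose `k`-th diagonal entry is the `k`-th leading principal minor of `A`;
in particular, the lower-right entry of `B` is `det A`. -/
theorem bareiss_diagonal_eq_leading_minors
    {n : ℕ} (A : Matrix (Fin n) (Fin n) ℤ)
    (hminors : ∀ k : Fin n, (k : ℕ) + 1 < n → leadingMinor A k ≠ 0) :
    (∀ i j : Fin n, (j : ℕ) < (i : ℕ) → bareiss A i j = 0) ∧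
    (∀ k : Fin n, bareiss A k k = leadingMinor A k) ∧
    (∀ h0 : 0 < n,
      bareiss A ⟨n - 1, by omega⟩ ⟨n - 1, by omega⟩ = A.det) := by
  have hm : ∀ t, t < n → BareissAux.pm A t ≠ 0 := by
    intro t ht
    cases t with
    | zero =>
      rw [BareissAux.pm_zero]
      exact one_ne_zero
    | succ t =>
      have h' : t < n := by omega
      intro hc
      exact hminors ⟨t, h'⟩ ht (by rw [BareissAux.leadingMinor_eq_pm]; exact hc)
  have hb : ∀ s j : Fin n, bareiss A s j = BareissAux.Dm A (min n (s : ℕ)) s j :=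
    BareissAux.foldl_eq A hm n le_rfl
  refine ⟨?_, ?_, ?_⟩
  · intro i j hji
    rw [hb i j, Nat.min_eq_right (le_of_lt i.isLt)]
    exact BareissAux.Dm_lower A i j hji
  · intro k
    rw [hb k k, Nat.min_eq_right (le_of_lt k.isLt)]
    exact BareissAux.Dm_diag A k
  · intro h0
    rw [hb, Nat.min_eq_right (le_of_lt (Fin.isLt _)), BareissAux.Dm_diag]
    exact BareissAux.leadingMinor_last A h0
end

section
/- For the degree-d surface S = {φ(x₀,x₁) = ψ(x₂,x₃)} ⊂ P³ with φ, ψ squarefree homogeneous of degree d, the number of 'lines of the first type' — lines joining a zero of φ on L₁ = V(x₂,x₃) to a zero of ψ on L₂ = V(x₀,x₁) — is exactly d², and each such line is contained in S. -/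
open MvPolynomial Polynomial

namespace LinesAux


/-- degree of exponent vector in two variables -/
lemma deg_two (m : Fin 2 →₀ ℕ) : m.degree = m 0 + m 1 := by
  rw [Finsupp.degree_eq_weight_one]
  simp [Finsupp.weight_apply, Finsupp.sum_fintype, Fin.sum_univ_two]

lemma coeff_deg {d : ℕ} {φ : MvPolynomial (Fin 2) ℂ} (hφ : φ.IsHomogeneous d)
    {m : Fin 2 →₀ ℕ} (h : MvPolynomial.coeff m φ ≠ 0) : m 0 + m 1 = d := by
  have := hφ h
  rw [← deg_two, Finsupp.degree_eq_weight_one]; exact this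

lemma eval_smul {d : ℕ} {φ : MvPolynomial (Fin 2) ℂ} (hφ : φ.IsHomogeneous d)
    (s : ℂ) (u : Fin 2 → ℂ) :
    MvPolynomial.eval (s • u) φ = s ^ d * MvPolynomial.eval u φ := by
  rw [eval_eq, eval_eq, Finset.mul_sum]
  refine Finset.sum_congr rfl fun m hm => ?_
  have hdm : m 0 + m 1 = d := coeff_deg hφ (mem_support_iff.mp hm)
  have : ∏ i ∈ m.support, (s • u) i ^ m i
      = s ^ d * ∏ i ∈ m.support, u i ^ m i := by
    simp only [Pi.smul_apply, smul_eq_mul, mul_pow, Finset.prod_mul_distrib]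
    rw [Finset.prod_pow_eq_pow_sum]
    congr 2
    rw [← hdm, ← deg_two m]
    rfl
  rw [this]; ring



noncomputable def md (d k : ℕ) : Fin 2 →₀ ℕ := Finsupp.single 0 k + Finsupp.single 1 (d - k)

@[simp] lemma md_zero (d k : ℕ) : md d k 0 = k := by simp [md]
@[simp] lemma md_one (d k : ℕ) : md d k 1 = d - k := by simp [md]

lemma eq_md {d : ℕ} {m : Fin 2 →₀ ℕ} (h : m 0 + m 1 = d) : m = md d (m 0) := by
  ext i
  fin_cases i
  · simp
  · simp [md]; omega

lemma md_inj {d : ℕ} {j k : ℕ} (hj : j ≤ d) (hk : k ≤ d) (h : md d j = md d k) : j = k := by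
  have := congrArg (fun m => m 0) h
  simpa using this

/-- structure of homogeneous polys in two variables -/
lemma homog_eq_sum {d : ℕ} {φ : MvPolynomial (Fin 2) ℂ} (hφ : φ.IsHomogeneous d) :
    φ = ∑ k ∈ Finset.range (d + 1), monomial (md d k) (MvPolynomial.coeff (md d k) φ) := by
  apply MvPolynomial.ext; intro m
  rw [MvPolynomial.coeff_sum]
  simp only [MvPolynomial.coeff_monomial]
  by_cases h : MvPolynomial.coeff m φ = 0
  · rw [h, Finset.sum_eq_zero]
    intro k _
    split_ifs with he
    · rw [he, h]
    · rfl
  · have hd := coeff_deg hφ h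
    have hm : m = md d (m 0) := eq_md hd
    have hle : m 0 ≤ d := by omega
    rw [Finset.sum_eq_single (m 0)]
    · rw [if_pos hm.symm, ← hm]
    · intro k hk hne
      rw [if_neg]
      intro he
      exact hne (md_inj (Nat.lt_succ_iff.mp (Finset.mem_range.mp hk)) hle (he.trans hm))
    · intro hnot
      exact absurd (Finset.mem_range.mpr (by omega)) hnot

/-- dehomogenization at x₁ = 1 -/
noncomputable def Dh (d : ℕ) (φ : MvPolynomial (Fin 2) ℂ) : Polynomial ℂ :=
  ∑ k ∈ Finset.range (d + 1), Polynomial.C (MvPolynomial.coeff (md d k) φ) * Polynomial.X ^ k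

lemma Dh_coeff (d : ℕ) (φ : MvPolynomial (Fin 2) ℂ) {k : ℕ} (hk : k ≤ d) :
    (Dh d φ).coeff k = MvPolynomial.coeff (md d k) φ := by
  rw [Dh, Polynomial.finset_sum_coeff]
  rw [Finset.sum_eq_single k]
  · simp
  · intro j _ hne
    simp [Polynomial.coeff_C_mul, Polynomial.coeff_X_pow, Ne.symm hne]
  · intro hnot
    exact absurd (Finset.mem_range.mpr (by omega)) hnot

lemma Dh_coeff_of_gt (d : ℕ) (φ : MvPolynomial (Fin 2) ℂ) {k : ℕ} (hk : d < k) :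
    (Dh d φ).coeff k = 0 := by
  rw [Dh, Polynomial.finset_sum_coeff]
  apply Finset.sum_eq_zero
  intro j hj
  rw [Finset.mem_range] at hj
  simp only [Polynomial.coeff_C_mul, Polynomial.coeff_X_pow]
  rw [if_neg (by omega : ¬ k = j), mul_zero]

lemma Dh_natDegree_le (d : ℕ) (φ : MvPolynomial (Fin 2) ℂ) : (Dh d φ).natDegree ≤ d :=
  Polynomial.natDegree_le_iff_coeff_eq_zero.mpr fun _ h => Dh_coeff_of_gt d φ h

lemma Dh_eval {d : ℕ} {φ : MvPolynomial (Fin 2) ℂ} (hφ : φ.IsHomogeneous d) (a : ℂ) :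
    (Dh d φ).eval a = MvPolynomial.eval ![a, 1] φ := by
  conv_rhs => rw [homog_eq_sum hφ]
  rw [Dh, Polynomial.eval_finset_sum, map_sum]
  refine Finset.sum_congr rfl fun k hk => ?_
  rw [MvPolynomial.eval_monomial]
  simp [Finsupp.prod_add_index, Finsupp.prod_single_index]



section B3
variable {d : ℕ} {φ : MvPolynomial (Fin 2) ℂ}

lemma eval_bind (x : Fin 2 → ℂ) (g : Fin 2 → MvPolynomial (Fin 2) ℂ) (p : MvPolynomial (Fin 2) ℂ) :
    MvPolynomial.eval x (bind₁ g p) = MvPolynomial.eval (fun i => MvPolynomial.eval x (g i)) p := by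
  simpa using eval₂Hom_bind₁ (RingHom.id ℂ) x g p

lemma mono_dvd (s : Fin 2 →₀ ℕ) (h : ∀ m, MvPolynomial.coeff m φ ≠ 0 → s ≤ m) :
    monomial s (1 : ℂ) ∣ φ := by
  rw [MvPolynomial.monomial_one_dvd_iff_modMonomial_eq_zero]
  apply MvPolynomial.ext; intro m
  by_cases hle : s ≤ m
  · simp [MvPolynomial.coeff_modMonomial_of_le _ hle]
  · rw [MvPolynomial.coeff_modMonomial_of_not_le _ hle, MvPolynomial.coeff_zero]
    by_contra hc
    exact hle (h m hc)

lemma X0_sq_dvd (hφ : φ.IsHomogeneous d) (hd : 1 ≤ d)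
    (h0 : MvPolynomial.coeff (md d 0) φ = 0) (h1 : MvPolynomial.coeff (md d 1) φ = 0) :
    (X 0 : MvPolynomial (Fin 2) ℂ) ^ 2 ∣ φ := by
  rw [MvPolynomial.X_pow_eq_monomial]
  apply mono_dvd
  intro m hm
  rw [Finsupp.single_le_iff]
  by_contra hc
  have hdm := coeff_deg hφ hm
  have hm' := eq_md hdm
  interval_cases h : m 0
  · rw [hm'] at hm; simp [h] at hm; exact hm h0
  · rw [hm'] at hm; simp [h] at hm; exact hm h1

lemma X1_sq_dvd (hφ : φ.IsHomogeneous d) (hd : 1 ≤ d)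
    (h0 : MvPolynomial.coeff (md d d) φ = 0) (h1 : MvPolynomial.coeff (md d (d-1)) φ = 0) :
    (X 1 : MvPolynomial (Fin 2) ℂ) ^ 2 ∣ φ := by
  rw [MvPolynomial.X_pow_eq_monomial]
  apply mono_dvd
  intro m hm
  rw [Finsupp.single_le_iff]
  by_contra hc
  have hdm := coeff_deg hφ hm
  have hm' := eq_md hdm
  interval_cases h : m 1
  · have : m 0 = d := by omega
    rw [hm', this] at hm; exact hm h0
  · have : m 0 = d - 1 := by omega
    rw [hm', this] at hm; exact hm h1

lemma Dh_ne_zero (hφ : φ.IsHomogeneous d) (hne : φ ≠ 0) : Dh d φ ≠ 0 := by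
  intro h
  apply hne
  rw [homog_eq_sum hφ]
  apply Finset.sum_eq_zero
  intro k hk
  have : MvPolynomial.coeff (md d k) φ = (Dh d φ).coeff k :=
    (Dh_coeff d φ (Nat.lt_succ_iff.mp (Finset.mem_range.mp hk))).symm
  rw [this, h]
  simp

lemma Dh_squarefree (hd : 1 ≤ d) (hφ : φ.IsHomogeneous d) (hsf : Squarefree φ) :
    Squarefree (Dh d φ) := by
  have hφne : φ ≠ 0 := hsf.ne_zero
  have hDne : Dh d φ ≠ 0 := Dh_ne_zero hφ hφne
  intro g hg
  by_contra hng
  have hgne : g ≠ 0 := by rintro rfl; rw [mul_zero] at hg; exact hDne (zero_dvd_iff.mp hg)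
  obtain ⟨a, ha⟩ := Complex.exists_root (Polynomial.degree_pos_of_ne_zero_of_nonunit hgne hng)
  have hXa : (Polynomial.X - Polynomial.C a) * (Polynomial.X - Polynomial.C a) ∣ Dh d φ :=
    dvd_trans (mul_dvd_mul (Polynomial.dvd_iff_isRoot.mpr ha) (Polynomial.dvd_iff_isRoot.mpr ha)) hg
  -- change of variables
  set σa : Fin 2 → MvPolynomial (Fin 2) ℂ := ![X 0 + MvPolynomial.C a * X 1, X 1] with hσa
  set τa : Fin 2 → MvPolynomial (Fin 2) ℂ := ![X 0 - MvPolynomial.C a * X 1, X 1] with hτa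
  set φ' : MvPolynomial (Fin 2) ℂ := bind₁ σa φ with hφ'def
  have hφ' : φ'.IsHomogeneous d := by
    have hg : ∀ i, (σa i).IsHomogeneous 1 := by
      intro i; fin_cases i
      · simpa [hσa] using (isHomogeneous_X ℂ (0:Fin 2)).add
          (by simpa using (isHomogeneous_C (Fin 2) a).mul (isHomogeneous_X ℂ (1:Fin 2)))
      · simpa [hσa] using isHomogeneous_X ℂ (1:Fin 2)
    have := hφ.aeval σa hg
    rw [one_mul, aeval_eq_bind₁] at this
    exact this
  -- Dh of φ' is composition
  have hcomp : Dh d φ' = (Dh d φ).comp (Polynomial.X + Polynomial.C a) := by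
    apply Polynomial.funext
    intro r
    rw [Dh_eval hφ' r, Polynomial.eval_comp]
    simp only [Polynomial.eval_add, Polynomial.eval_X, Polynomial.eval_C]
    rw [Dh_eval hφ (r + a), hφ'def, eval_bind]
    have harg : (fun i => MvPolynomial.eval ![r, 1] (σa i)) = ![r + a, 1] := by
      funext i; fin_cases i <;> simp [hσa]
    rw [harg]
  -- X^2 divides Dh d φ'
  obtain ⟨q, hq⟩ := hXa
  have hX2 : Polynomial.X ^ 2 ∣ Dh d φ' := by
    rw [hcomp, hq, Polynomial.mul_comp, Polynomial.mul_comp, Polynomial.sub_comp]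
    simp only [Polynomial.X_comp, Polynomial.C_comp, add_sub_cancel_right]
    exact ⟨q.comp (Polynomial.X + Polynomial.C a), by ring⟩
  -- low coefficients vanish
  obtain ⟨q2, hq2⟩ := hX2
  have hc0 : MvPolynomial.coeff (md d 0) φ' = 0 := by
    rw [← Dh_coeff d φ' (Nat.zero_le d), hq2]
    simp [Polynomial.coeff_X_pow_mul]
  have hc1 : MvPolynomial.coeff (md d 1) φ' = 0 := by
    rw [← Dh_coeff d φ' hd, hq2]
    rw [mul_comm, Polynomial.coeff_mul_X_pow']
    simp
  have hX0 := X0_sq_dvd hφ' hd hc0 hc1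
  -- transport back
  have hback : bind₁ τa φ' = φ := by
    rw [hφ'def, bind₁_bind₁]
    have : (fun i => bind₁ τa (σa i)) = MvPolynomial.X := by
      funext i
      fin_cases i <;> simp [hσa, hτa] <;> ring
    rw [this, bind₁_X_left]
    rfl
  set ℓ : MvPolynomial (Fin 2) ℂ := X 0 - MvPolynomial.C a * X 1 with hℓ
  have hℓdvd : ℓ * ℓ ∣ φ := by
    obtain ⟨q3, hq3⟩ := hX0
    rw [← hback, hq3]
    refine ⟨bind₁ τa q3, ?_⟩
    rw [map_mul, map_pow, bind₁_X_right]
    simp only [hτa, Matrix.cons_val_zero]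
    ring
  have := hsf ℓ hℓdvd
  have h0 : MvPolynomial.eval ![a, 1] ℓ = 0 := by simp [hℓ]
  have := this.map (MvPolynomial.eval ![a, 1])
  rw [h0] at this
  exact not_isUnit_zero this

end B3

section B4
variable {d : ℕ} {φ : MvPolynomial (Fin 2) ℂ}

lemma eval_monomial_md (k : ℕ) (c : ℂ) (x : Fin 2 → ℂ) :
    MvPolynomial.eval x (monomial (md d k) c) = c * x 0 ^ k * x 1 ^ (d - k) := by
  have hm : monomial (md d k) c = MvPolynomial.C c * X 0 ^ k * X 1 ^ (d - k) := by
    rw [MvPolynomial.X_pow_eq_monomial, MvPolynomial.X_pow_eq_monomial, MvPolynomial.C_apply,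
      MvPolynomial.monomial_mul, MvPolynomial.monomial_mul, md]
    simp
  rw [hm]
  simp [mul_assoc]

lemma eval_inf (hφ : φ.IsHomogeneous d) :
    MvPolynomial.eval ![1, 0] φ = MvPolynomial.coeff (md d d) φ := by
  conv_lhs => rw [homog_eq_sum hφ]
  rw [map_sum]
  rw [Finset.sum_eq_single d
    (fun k hk _ => by
      rw [eval_monomial_md]
      have h2 : d - k ≠ 0 := by rw [Finset.mem_range] at hk; omega
      simp [zero_pow h2])
    (fun h => absurd (Finset.mem_range.mpr (by omega)) h)]
  simp [eval_monomial_md]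

lemma X1_nonunit : ¬ IsUnit (X 1 : MvPolynomial (Fin 2) ℂ) := by
  intro h
  have := h.map (MvPolynomial.eval ![1, 0])
  rw [MvPolynomial.eval_X] at this
  simp only [Matrix.cons_val_one, Matrix.head_cons] at this
  exact not_isUnit_zero this

lemma natdeg_top (hφ : φ.IsHomogeneous d) (h : MvPolynomial.coeff (md d d) φ ≠ 0) :
    (Dh d φ).natDegree = d :=
  le_antisymm (Dh_natDegree_le d φ)
    (Polynomial.le_natDegree_of_ne_zero (by rwa [Dh_coeff d φ le_rfl]))

lemma natdeg_inf (hd : 1 ≤ d) (hφ : φ.IsHomogeneous d) (hsf : Squarefree φ)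
    (h : MvPolynomial.coeff (md d d) φ = 0) :
    (Dh d φ).natDegree = d - 1 := by
  have hne : MvPolynomial.coeff (md d (d - 1)) φ ≠ 0 := by
    intro h1
    exact X1_nonunit (hsf _ (by simpa [sq] using X1_sq_dvd hφ hd h h1))
  refine le_antisymm ?_ (Polynomial.le_natDegree_of_ne_zero (by rwa [Dh_coeff d φ (by omega)]))
  rw [Polynomial.natDegree_le_iff_coeff_eq_zero]
  intro N hN
  rcases lt_or_ge d N with hlt | hle
  · exact Dh_coeff_of_gt d φ hlt
  · have : N = d := by omega
    rw [this, Dh_coeff d φ le_rfl, h]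

lemma zero_rep (hφ : φ.IsHomogeneous d) {u : Fin 2 → ℂ} (hu : u ≠ 0)
    (h : MvPolynomial.eval u φ = 0) :
    MvPolynomial.eval (Projectivization.mk ℂ u hu).rep φ = 0 := by
  have hmk := Projectivization.mk_rep (Projectivization.mk ℂ u hu)
  rw [Projectivization.mk_eq_mk_iff] at hmk
  obtain ⟨c, hc⟩ := hmk
  rw [← hc, Units.smul_def, eval_smul hφ, h, mul_zero]

lemma vne (a : ℂ) : (![a, 1] : Fin 2 → ℂ) ≠ 0 := by
  intro h; have := congrFun h 1; simp at this

lemma infne : (![1, 0] : Fin 2 → ℂ) ≠ 0 := by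
  intro h; have := congrFun h 0; simp at this

/-- the key counting lemma -/
lemma zero_set_ncard (hd : 1 ≤ d) (hφ : φ.IsHomogeneous d) (hsf : Squarefree φ) :
    Set.ncard {p : Projectivization ℂ (Fin 2 → ℂ) | MvPolynomial.eval p.rep φ = 0} = d := by
  classical
  have hφne : φ ≠ 0 := hsf.ne_zero
  have hDne : Dh d φ ≠ 0 := Dh_ne_zero hφ hφne
  set pt : ℂ → Projectivization ℂ (Fin 2 → ℂ) := fun a => Projectivization.mk ℂ ![a, 1] (vne a)
    with hpt
  set inf : Projectivization ℂ (Fin 2 → ℂ) := Projectivization.mk ℂ ![1, 0] infne with hinf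
  have haev : ∀ a : ℂ, Polynomial.aeval a (Dh d φ) = MvPolynomial.eval ![a, 1] φ := by
    intro a
    rw [← Dh_eval hφ a]
    rw [Polynomial.coe_aeval_eq_eval]
  have hset : {p : Projectivization ℂ (Fin 2 → ℂ) | MvPolynomial.eval p.rep φ = 0}
      = pt '' ((Dh d φ).rootSet ℂ)
        ∪ (if MvPolynomial.coeff (md d d) φ = 0 then {inf} else ∅) := by
    ext p
    simp only [Set.mem_setOf_eq, Set.mem_union, Set.mem_image]
    constructor
    · intro hp
      by_cases h1 : p.rep 1 = 0
      · right
        have h0 : p.rep 0 ≠ 0 := by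
          intro h0
          apply Projectivization.rep_nonzero p
          funext i; fin_cases i <;> simp [h0, h1]
        have hrep : p.rep = p.rep 0 • ![1, 0] := by
          funext i; fin_cases i <;> simp [h1]
        have hcd : MvPolynomial.coeff (md d d) φ = 0 := by
          rw [hrep, eval_smul hφ, eval_inf hφ] at hp
          rcases mul_eq_zero.mp hp with h | h
          · exact absurd h (pow_ne_zero d h0)
          · exact h
        rw [if_pos hcd]
        suffices hps : p = inf by simp [hps]
        conv_lhs => rw [← Projectivization.mk_rep p]
        rw [hinf, Projectivization.mk_eq_mk_iff]
        exact ⟨Units.mk0 (p.rep 0) h0, by rw [Units.smul_def, Units.val_mk0, ← hrep]⟩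
      · left
        refine ⟨p.rep 0 / p.rep 1, ?_, ?_⟩
        · rw [Polynomial.mem_rootSet]
          refine ⟨hDne, ?_⟩
          rw [haev]
          have : (![p.rep 0 / p.rep 1, 1] : Fin 2 → ℂ) = (p.rep 1)⁻¹ • p.rep := by
            funext i; fin_cases i
            · simp [div_eq_inv_mul]
            · simp [inv_mul_cancel₀ h1]
          rw [this, eval_smul hφ, hp, mul_zero]
        · rw [hpt]
          conv_rhs => rw [← Projectivization.mk_rep p]
          rw [Projectivization.mk_eq_mk_iff]
          refine ⟨Units.mk0 (p.rep 1)⁻¹ (inv_ne_zero h1), ?_⟩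
          rw [Units.smul_def, Units.val_mk0]
          funext i; fin_cases i
          · simp [div_eq_inv_mul]
          · simp [inv_mul_cancel₀ h1]
    · intro hp
      rcases hp with ⟨a, ha, hpa⟩ | hp
      · rw [Polynomial.mem_rootSet] at ha
        have := ha.2
        rw [haev] at this
        rw [← hpa]
        exact zero_rep hφ (vne a) this
      · split_ifs at hp with hcd
        · rcases hp with rfl
          exact zero_rep hφ infne (by rw [eval_inf hφ, hcd])
        · exact absurd hp (Set.notMem_empty p)
  rw [hset]
  have hfin : ((Dh d φ).rootSet ℂ).Finite := Polynomial.rootSet_finite (Dh d φ) ℂ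
  have hptinj : Function.Injective pt := by
    intro a b hab
    rw [hpt, Projectivization.mk_eq_mk_iff] at hab
    obtain ⟨c, hc⟩ := hab
    have h1 := congrFun hc 1
    have h0 := congrFun hc 0
    simp [Units.smul_def] at h1 h0
    rw [h1] at h0
    simpa using h0.symm
  have himg : (pt '' ((Dh d φ).rootSet ℂ)).ncard = (Dh d φ).natDegree := by
    rw [Set.ncard_image_of_injective _ hptinj]
    have hsep : (Dh d φ).Separable :=
      PerfectField.separable_iff_squarefree.mpr (Dh_squarefree hd hφ hsf)
    have hcard : Fintype.card ((Dh d φ).rootSet ℂ) = (Dh d φ).natDegree :=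
      Polynomial.card_rootSet_eq_natDegree hsep (IsAlgClosed.splits _)
    rw [Set.ncard_eq_toFinset_card', Set.toFinset_card, hcard]
  by_cases hcd : MvPolynomial.coeff (md d d) φ = 0
  · rw [if_pos hcd]
    have hdisj : Disjoint (pt '' ((Dh d φ).rootSet ℂ)) {inf} := by
      rw [Set.disjoint_singleton_right]
      rintro ⟨a, _, ha⟩
      rw [hpt, hinf, Projectivization.mk_eq_mk_iff] at ha
      obtain ⟨c, hc⟩ := ha
      have := congrFun hc 1
      simp [Units.smul_def] at this
    rw [Set.ncard_union_eq hdisj (hfin.image pt) (Set.finite_singleton inf)]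
    rw [himg, Set.ncard_singleton, natdeg_inf hd hφ hsf hcd]
    omega
  · rw [if_neg hcd, Set.union_empty, himg, natdeg_top hφ hcd]

end B4

end LinesAux

/-- For the degree-`d` surface `S = {φ(x₀,x₁) = ψ(x₂,x₃)} ⊂ ℙ³` with `φ, ψ`
squarefree homogeneous of degree `d`, the lines of the first type — joining a
zero of `φ` on `L₁ = V(x₂,x₃)` to a zero of `ψ` on `L₂ = V(x₀,x₁)` — number
exactly `d²` (the zero sets in `ℙ¹` have `d` points each), and each such line
lies on `S`. -/
theorem lines_first_type_count_and_containment
    (d : ℕ) (hd : 1 ≤ d)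
    (φ ψ : MvPolynomial (Fin 2) ℂ)
    (hφ : φ.IsHomogeneous d) (hψ : ψ.IsHomogeneous d)
    (hφsf : Squarefree φ) (hψsf : Squarefree ψ) :
    Set.ncard ({p : Projectivization ℂ (Fin 2 → ℂ) | MvPolynomial.eval p.rep φ = 0} ×ˢ
        {q : Projectivization ℂ (Fin 2 → ℂ) | MvPolynomial.eval q.rep ψ = 0}) = d ^ 2 ∧
    ∀ u v : Fin 2 → ℂ, MvPolynomial.eval u φ = 0 → MvPolynomial.eval v ψ = 0 →
      ∀ s t : ℂ, MvPolynomial.eval (s • u) φ = MvPolynomial.eval (t • v) ψ := by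
  constructor
  · have h1 := LinesAux.zero_set_ncard hd hφ hφsf
    have h2 := LinesAux.zero_set_ncard hd hψ hψsf
    rw [← Nat.card_coe_set_eq, Nat.card_congr (Equiv.Set.prod _ _), Nat.card_prod,
      Nat.card_coe_set_eq, Nat.card_coe_set_eq, h1, h2, sq]
  · intro u v hu hv s t
    rw [LinesAux.eval_smul hφ, LinesAux.eval_smul hψ, hu, hv, mul_zero, mul_zero]
end
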